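/- Let 𝒳 be a measurable space, D ≥ 1, and f, q_lo, q_hi : 𝒳 → ℝ^D measurable. For λ ≥ 0 and x ∈ 𝒳, define for each d ∈ {1,…,D} the interval T_λ(x)_d = [f(x)_d − λ·max(f(x)_d − q_lo(x)_d, 0), f(x)_d + λ·max(q_hi(x)_d − f(x)_d, 0)], and for z ∈ ℝ^D the loss ℓ_λ(x, z) = 1 − (1/D)·|{d : z_d ∈ T_λ(x)_d}|. Let (X₁, Z₁), …, (Xₙ, Zₙ), (X, Z) be i.i.d. with law μ on 𝒳 × ℝ^D; let R(λ) = E_μ[ℓ_λ(X, Z)], and for α ∈ (0,1), δ ∈ (0,1) define the (random) upper confidence bound R̂⁺(λ) = (1/n)∑_{i=1}^n ℓ_λ(Xᵢ, Zᵢ) + √(log(1/δ)/(2n)) and the calibrated threshold λ̂ = inf{λ ≥ 0 : R̂⁺(λ') ≤ α for all λ' ≥ λ}, assumed almost surely to be the infimum of a nonempty set. Suppose {λ ≥ 0 : R(λ) > α} is nonempty and bounded above, with λ* = sup{λ ≥ 0 : R(λ) > α} satisfying R(λ*) ≤ α. Then, with probability at least 1 − δ over the calibration sample, R(λ̂) ≤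 α; that is, with probability at least 1 − δ, E[(1/D)·|{d : Z_d ∈ T_λ̂(X)_d}|] ≥ 1 − α. -/

import Mathlib

open MeasureTheory ProbabilityTheory
open scoped Classical

lemma hoeffding_pos_denom {p : ℝ} (hp0 : 0 ≤ p) (hp1 : p ≤ 1) (s : ℝ) :
    0 < 1 - p + p * Real.exp s := by
  rcases le_or_gt 1 (Real.exp s) with h | h
  · nlinarith [mul_nonneg hp0 (sub_nonneg.2 h)]
  · nlinarith [Real.exp_pos s, mul_nonneg (sub_nonneg.2 hp1) (le_of_lt (sub_pos.2 h))]

/-- Hoeffding's lemma, analytic core: for `p ∈ [0,1]` and `t ≤ 0`,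
`1 - p + p e^t ≤ exp (p t + t²/8)`. -/
lemma hoeffding_aux {p t : ℝ} (hp0 : 0 ≤ p) (hp1 : p ≤ 1) (ht : t ≤ 0) :
    1 - p + p * Real.exp t ≤ Real.exp (p * t + t ^ 2 / 8) := by
  set L : ℝ → ℝ := fun s => Real.log (1 - p + p * Real.exp s) - (p * s + s ^ 2 / 8) with hLdef
  set g : ℝ → ℝ := fun s =>
    p * Real.exp s / (1 - p + p * Real.exp s) - (p + s / 4) with hgdef
  have hpos := hoeffding_pos_denom hp0 hp1
  have hden : ∀ s : ℝ, HasDerivAt (fun s => 1 - p + p * Real.exp s) (p * Real.exp s) s := by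
    intro s
    simpa using ((Real.hasDerivAt_exp s).const_mul p).const_add (1 - p)
  have hderivL : ∀ s, HasDerivAt L (g s) s := by
    intro s
    have h2 : HasDerivAt (fun s => Real.log (1 - p + p * Real.exp s))
        (p * Real.exp s / (1 - p + p * Real.exp s)) s := (hden s).log (hpos s).ne'
    have h3 : HasDerivAt (fun s : ℝ => p * s + s ^ 2 / 8) (p + s / 4) s := by
      have := ((hasDerivAt_id s).const_mul p).add ((hasDerivAt_pow 2 s).div_const 8)
      exact this.congr_deriv (by rw [show (2:ℕ) - 1 = 1 from rfl]; push_cast; ring)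
    exact h2.sub h3
  have hderivg : ∀ s, HasDerivAt g
      ((p * Real.exp s * (1 - p + p * Real.exp s) - p * Real.exp s * (p * Real.exp s)) /
        (1 - p + p * Real.exp s) ^ 2 - 1 / 4) s := by
    intro s
    have h1 : HasDerivAt (fun s => p * Real.exp s) (p * Real.exp s) s := by
      simpa using (Real.hasDerivAt_exp s).const_mul p
    have hdiv := h1.div (hden s) (hpos s).ne'
    have h4 : HasDerivAt (fun s : ℝ => p + s / 4) (1 / 4 : ℝ) s := by
      simpa using ((hasDerivAt_id s).div_const 4).const_add p
    exact hdiv.sub h4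
  have hg_nonpos : ∀ s, (p * Real.exp s * (1 - p + p * Real.exp s) -
      p * Real.exp s * (p * Real.exp s)) / (1 - p + p * Real.exp s) ^ 2 - 1 / 4 ≤ 0 := by
    intro s
    have h2 : (0:ℝ) < (1 - p + p * Real.exp s) ^ 2 := pow_pos (hpos s) 2
    rw [sub_nonpos, div_le_iff₀ h2]
    nlinarith [sq_nonneg (1 - p - p * Real.exp s)]
  have hganti : Antitone g :=
    antitone_of_deriv_nonpos (fun s => (hderivg s).differentiableAt)
      (fun s => by rw [(hderivg s).deriv]; exact hg_nonpos s)
  have hg0 : g 0 = 0 := by simp [hgdef]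
  have hLmono : MonotoneOn L (Set.Iic 0) := by
    refine monotoneOn_of_deriv_nonneg (convex_Iic 0)
      (fun s _ => ((hderivL s).differentiableAt).continuousAt.continuousWithinAt)
      (fun s _ => ((hderivL s).differentiableAt).differentiableWithinAt) (fun s hs => ?_)
    rw [(hderivL s).deriv, ← hg0]
    exact hganti (le_of_lt (by simpa using hs))
  have hL0 : L 0 = 0 := by simp [hLdef]
  have hLt : L t ≤ 0 := hL0 ▸ hLmono (Set.mem_Iic.2 ht) (Set.mem_Iic.2 le_rfl) ht
  have hkey : Real.log (1 - p + p * Real.exp t) ≤ p * t + t ^ 2 / 8 := by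
    have := hLt; simp only [hLdef] at this; linarith
  calc 1 - p + p * Real.exp t = Real.exp (Real.log (1 - p + p * Real.exp t)) :=
        (Real.exp_log (hpos t)).symm
    _ ≤ _ := Real.exp_le_exp.2 hkey

/-- One-sided Hoeffding inequality for i.i.d.-mean `[0,1]`-valued random variables,
in the exact form needed for the RCPS calibration bound. -/
lemma chernoff_bound {Ω : Type*} [MeasurableSpace Ω] (P : Measure Ω) [IsProbabilityMeasure P]
    (n : ℕ) (hn : 0 < n) (X : Fin n → Ω → ℝ)
    (hXmeas : ∀ i, Measurable (X i))
    (hXindep : iIndepFun X P)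
    (hX0 : ∀ i ω, 0 ≤ X i ω) (hX1 : ∀ i ω, X i ω ≤ 1)
    (p : ℝ) (hp0 : 0 ≤ p) (hp1 : p ≤ 1) (hXmean : ∀ i, ∫ ω, X i ω ∂P = p)
    (α δ b : ℝ) (hδ0 : 0 < δ) (hδ1 : δ < 1)
    (hb : b = Real.sqrt (Real.log (1/δ) / (2*n))) (hαp : α < p) :
    P {ω | (∑ i, X i) ω ≤ n * (α - b)} ≤ ENNReal.ofReal δ := by
  have hn' : (0:ℝ) < n := by exact_mod_cast hn
  have hlogδ : (0:ℝ) < Real.log (1/δ) := Real.log_pos (one_lt_one_div hδ0 hδ1)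
  have hbpos : 0 < b := by rw [hb]; exact Real.sqrt_pos.2 (div_pos hlogδ (by positivity))
  have hb2 : 2 * (n:ℝ) * b ^ 2 = Real.log (1/δ) := by
    rw [hb, Real.sq_sqrt (le_of_lt (div_pos hlogδ (by positivity)))]
    field_simp
  set t : ℝ := -(4*b) with htdef
  have ht : t ≤ 0 := by rw [htdef]; nlinarith
  have hint1 : ∀ i, Integrable (fun ω => Real.exp (t * X i ω)) P := by
    intro i
    refine Integrable.mono' (integrable_const 1)
      (((hXmeas i).const_mul t).exp.aestronglyMeasurable) (ae_of_all _ fun ω => ?_)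
    rw [Real.norm_eq_abs, abs_of_pos (Real.exp_pos _)]
    exact Real.exp_le_one_iff.2 (mul_nonpos_iff.2 (Or.inr ⟨ht, hX0 i ω⟩))
  have hXint : ∀ i, Integrable (X i) P := by
    intro i
    refine Integrable.mono' (integrable_const 1) (hXmeas i).aestronglyMeasurable
      (ae_of_all _ fun ω => ?_)
    rw [Real.norm_eq_abs, abs_of_nonneg (hX0 i ω)]; exact hX1 i ω
  have hmgf : ∀ i, mgf (X i) P t ≤ Real.exp (p * t + t ^ 2 / 8) := by
    intro i
    have i1 : Integrable (fun ω => 1 - X i ω) P := (integrable_const 1).sub (hXint i)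
    have i2 : Integrable (fun ω => X i ω * Real.exp t) P := (hXint i).mul_const _
    have step1 : mgf (X i) P t ≤ ∫ ω, (1 - X i ω + X i ω * Real.exp t) ∂P := by
      refine integral_mono (hint1 i) (i1.add i2) (fun ω => ?_)
      have hx0 := hX0 i ω; have hx1 := hX1 i ω
      have hconv := convexOn_exp.2 (Set.mem_univ 0) (Set.mem_univ t)
        (by linarith : (0:ℝ) ≤ 1 - X i ω) hx0 (by ring)
      simp only [smul_eq_mul, mul_zero, zero_add, Real.exp_zero, mul_one] at hconv
      calc Real.exp (t * X i ω) = Real.exp (X i ω * t) := by rw [mul_comm]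
        _ ≤ 1 - X i ω + X i ω * Real.exp t := hconv
    have step2 : ∫ ω, (1 - X i ω + X i ω * Real.exp t) ∂P = 1 - p + p * Real.exp t := by
      rw [integral_add i1 i2, integral_sub (integrable_const 1) (hXint i),
        integral_mul_const, hXmean i]
      simp
    exact (step1.trans_eq step2).trans (hoeffding_aux hp0 hp1 ht)
  have hmgfsum : mgf (∑ i, X i) P t ≤ Real.exp (n * (p * t + t ^ 2 / 8)) := by
    rw [hXindep.mgf_sum hXmeas Finset.univ]
    calc ∏ i, mgf (X i) P t ≤ ∏ _i : Fin n, Real.exp (p * t + t ^ 2 / 8) :=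
          Finset.prod_le_prod (fun i _ => mgf_nonneg) (fun i _ => hmgf i)
      _ = Real.exp ((n:ℝ) * (p * t + t ^ 2 / 8)) := by
          rw [Finset.prod_const, Finset.card_univ, Fintype.card_fin, ← Real.exp_nat_mul]
  have hintsum : Integrable (fun ω => Real.exp (t * (∑ i, X i) ω)) P :=
    hXindep.integrable_exp_mul_sum hXmeas (fun i _ => hint1 i)
  have hchern := measure_le_le_exp_mul_mgf (μ := P) (X := ∑ i, X i) ((n:ℝ) * (α - b)) ht hintsum
  have hreal : (P {ω | (∑ i, X i) ω ≤ (n:ℝ) * (α - b)}).toReal ≤ δ := by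
    calc (P {ω | (∑ i, X i) ω ≤ (n:ℝ) * (α - b)}).toReal
        ≤ Real.exp (-t * ((n:ℝ) * (α - b))) * mgf (∑ i, X i) P t := hchern
      _ ≤ Real.exp (-t * ((n:ℝ) * (α - b))) * Real.exp ((n:ℝ) * (p * t + t ^ 2 / 8)) :=
          mul_le_mul_of_nonneg_left hmgfsum (Real.exp_pos _).le
      _ = Real.exp (-t * ((n:ℝ) * (α - b)) + (n:ℝ) * (p * t + t ^ 2 / 8)) :=
          (Real.exp_add _ _).symm
      _ ≤ Real.exp (Real.log δ) := by
          apply Real.exp_le_exp.2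
          have hlog : Real.log (1/δ) = -Real.log δ := by rw [one_div, Real.log_inv]
          rw [htdef]
          nlinarith [mul_nonneg (mul_nonneg hn'.le hbpos.le) (sub_nonneg.2 (le_of_lt hαp))]
      _ = δ := Real.exp_log hδ0
  rw [← ENNReal.ofReal_toReal (measure_ne_top P _)]
  exact ENNReal.ofReal_le_ofReal hreal

theorem rcps_semantic_intervals
    {𝒳 : Type*} [MeasurableSpace 𝒳] {Ω : Type*} [MeasurableSpace Ω]
    (P : Measure Ω) [IsProbabilityMeasure P]
    (D : ℕ) (hD : 1 ≤ D)
    (f qlo qhi : 𝒳 → Fin D → ℝ)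
    (hf : Measurable f) (hqlo : Measurable qlo) (hqhi : Measurable qhi)
    (T : ℝ → 𝒳 → Fin D → Set ℝ)
    (hT : ∀ lam x d, T lam x d =
      Set.Icc (f x d - lam * max (f x d - qlo x d) 0)
              (f x d + lam * max (qhi x d - f x d) 0))
    (loss : ℝ → 𝒳 → (Fin D → ℝ) → ℝ)
    (hloss : ∀ lam x z, loss lam x z =
      1 - ((Finset.univ.filter fun d => z d ∈ T lam x d).card : ℝ) / D)
    (μ : Measure (𝒳 × (Fin D → ℝ))) [IsProbabilityMeasure μ]
    (n : ℕ) (hn : 0 < n)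
    (W : Fin n → Ω → 𝒳 × (Fin D → ℝ))
    (hWmeas : ∀ i, Measurable (W i))
    (hWindep : iIndepFun W P)
    (hWlaw : ∀ i, Measure.map (W i) P = μ)
    (R : ℝ → ℝ) (hR : ∀ lam, R lam = ∫ w, loss lam w.1 w.2 ∂μ)
    (α δ : ℝ) (hα : α ∈ Set.Ioo (0 : ℝ) 1) (hδ : δ ∈ Set.Ioo (0 : ℝ) 1)
    (Rhat : Ω → ℝ → ℝ)
    (hRhat : ∀ ω lam, Rhat ω lam =
      (∑ i, loss lam (W i ω).1 (W i ω).2) / n + Real.sqrt (Real.log (1 / δ) / (2 * n)))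
    (lamHat : Ω → ℝ)
    (hlamHat : ∀ ω, lamHat ω = sInf {lam | 0 ≤ lam ∧ ∀ lam' ≥ lam, Rhat ω lam' ≤ α})
    (hne : ∀ᵐ ω ∂P, {lam | 0 ≤ lam ∧ ∀ lam' ≥ lam, Rhat ω lam' ≤ α}.Nonempty)
    (hRne : {lam | 0 ≤ lam ∧ R lam > α}.Nonempty)
    (hRbdd : BddAbove {lam | 0 ≤ lam ∧ R lam > α})
    (hRstar : R (sSup {lam | 0 ≤ lam ∧ R lam > α}) ≤ α) :
    P {ω | R (lamHat ω) ≤ α} ≥ 1 - ENNReal.ofReal δ := by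
  have hn' : (0:ℝ) < n := by exact_mod_cast hn
  have hDpos : (0:ℝ) < D := by exact_mod_cast Nat.lt_of_lt_of_le Nat.zero_lt_one hD
  -- pointwise bounds on the loss
  have hl0 : ∀ lam x z, 0 ≤ loss lam x z := by
    intro lam x z
    rw [hloss]
    have hcard : ((Finset.univ.filter fun d => z d ∈ T lam x d).card : ℝ) ≤ D := by
      have h1 := Finset.card_filter_le (Finset.univ : Finset (Fin D))
        (fun d => z d ∈ T lam x d)
      have h2 : (Finset.univ : Finset (Fin D)).card = D := by simp
      exact_mod_cast h1.trans_eq h2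
    have := div_le_one_of_le₀ hcard hDpos.le
    linarith
  have hl1 : ∀ lam x z, loss lam x z ≤ 1 := by
    intro lam x z; rw [hloss]
    have h0 : (0:ℝ) ≤ ((Finset.univ.filter fun d => z d ∈ T lam x d).card : ℝ) / D := by
      positivity
    linarith
  -- monotonicity of the intervals and antitonicity of the loss in `lam`
  have hTmono : ∀ x (d : Fin D) z ⦃lam lam' : ℝ⦄, 0 ≤ lam → lam ≤ lam' →
      z ∈ T lam x d → z ∈ T lam' x d := by
    intro x d z lam lam' h0 hle hz
    rw [hT] at hz ⊢
    refine Set.Icc_subset_Icc ?_ ?_ hz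
    · have := mul_le_mul_of_nonneg_right hle (le_max_right (f x d - qlo x d) 0)
      linarith
    · have := mul_le_mul_of_nonneg_right hle (le_max_right (qhi x d - f x d) 0)
      linarith
  have hlossmono : ∀ x z ⦃lam lam' : ℝ⦄, 0 ≤ lam → lam ≤ lam' →
      loss lam' x z ≤ loss lam x z := by
    intro x z lam lam' h0 hle
    rw [hloss, hloss]
    have hsub : (Finset.univ.filter fun d => z d ∈ T lam x d) ⊆
        (Finset.univ.filter fun d => z d ∈ T lam' x d) := by
      intro d hd
      simp only [Finset.mem_filter] at hd ⊢
      exact ⟨hd.1, hTmono x d (z d) h0 hle hd.2⟩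
    have hcard : ((Finset.univ.filter fun d => z d ∈ T lam x d).card : ℝ) ≤
        ((Finset.univ.filter fun d => z d ∈ T lam' x d).card : ℝ) := by
      exact_mod_cast Finset.card_le_card hsub
    have hdiv : ((Finset.univ.filter fun d => z d ∈ T lam x d).card : ℝ) / D ≤
        ((Finset.univ.filter fun d => z d ∈ T lam' x d).card : ℝ) / D := by gcongr
    linarith
  -- measurability of the loss
  have hsetmeas : ∀ (lam : ℝ) (d : Fin D),
      MeasurableSet {w : 𝒳 × (Fin D → ℝ) | w.2 d ∈ T lam w.1 d} := by
    intro lam d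
    have hfd : Measurable fun w : 𝒳 × (Fin D → ℝ) => f w.1 d :=
      (measurable_pi_apply d).comp (hf.comp measurable_fst)
    have hlod : Measurable fun w : 𝒳 × (Fin D → ℝ) => qlo w.1 d :=
      (measurable_pi_apply d).comp (hqlo.comp measurable_fst)
    have hhid : Measurable fun w : 𝒳 × (Fin D → ℝ) => qhi w.1 d :=
      (measurable_pi_apply d).comp (hqhi.comp measurable_fst)
    have hzd : Measurable fun w : 𝒳 × (Fin D → ℝ) => w.2 d :=
      (measurable_pi_apply d).comp measurable_snd
    have heq : {w : 𝒳 × (Fin D → ℝ) | w.2 d ∈ T lam w.1 d} =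
        {w : 𝒳 × (Fin D → ℝ) | f w.1 d - lam * max (f w.1 d - qlo w.1 d) 0 ≤ w.2 d} ∩
        {w : 𝒳 × (Fin D → ℝ) | w.2 d ≤ f w.1 d + lam * max (qhi w.1 d - f w.1 d) 0} := by
      ext w
      simp only [Set.mem_setOf_eq, Set.mem_inter_iff, hT, Set.mem_Icc]
    rw [heq]
    exact (measurableSet_le
        (hfd.sub (((hfd.sub hlod).max measurable_const).const_mul lam)) hzd).inter
      (measurableSet_le hzd (hfd.add (((hhid.sub hfd).max measurable_const).const_mul lam)))
  have hlm : ∀ lam, Measurable fun w : 𝒳 × (Fin D → ℝ) => loss lam w.1 w.2 := by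
    intro lam
    have hcm : Measurable fun w : 𝒳 × (Fin D → ℝ) =>
        ((Finset.univ.filter fun d => w.2 d ∈ T lam w.1 d).card : ℝ) := by
      have heq : (fun w : 𝒳 × (Fin D → ℝ) =>
          ((Finset.univ.filter fun d => w.2 d ∈ T lam w.1 d).card : ℝ)) =
          fun w => ∑ d : Fin D,
            ({w' : 𝒳 × (Fin D → ℝ) | w'.2 d ∈ T lam w'.1 d}).indicator
              (fun _ => (1:ℝ)) w := by
        funext w
        rw [Finset.card_filter]
        push_cast
        refine Finset.sum_congr rfl fun d _ => ?_
        by_cases h : w.2 d ∈ T lam w.1 d <;> simp [Set.indicator, h]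
      rw [heq]
      exact Finset.measurable_sum _ fun d _ => measurable_const.indicator (hsetmeas lam d)
    have heq2 : (fun w : 𝒳 × (Fin D → ℝ) => loss lam w.1 w.2) =
        fun w => 1 - ((Finset.univ.filter fun d => w.2 d ∈ T lam w.1 d).card : ℝ) / D := by
      funext w; rw [hloss]
    rw [heq2]
    exact measurable_const.sub (hcm.div_const _)
  -- integrability over μ and basic bounds on R
  have hlint : ∀ lam, Integrable (fun w : 𝒳 × (Fin D → ℝ) => loss lam w.1 w.2) μ := by
    intro lam
    refine Integrable.mono' (integrable_const 1) (hlm lam).aestronglyMeasurable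
      (ae_of_all _ fun w => ?_)
    rw [Real.norm_eq_abs, abs_of_nonneg (hl0 _ _ _)]
    exact hl1 _ _ _
  have hR0 : ∀ lam, 0 ≤ R lam := by
    intro lam; rw [hR]; exact integral_nonneg fun w => hl0 _ _ _
  have hR1 : ∀ lam, R lam ≤ 1 := by
    intro lam; rw [hR]
    calc ∫ w, loss lam w.1 w.2 ∂μ ≤ ∫ _w, (1:ℝ) ∂μ :=
          integral_mono (hlint lam) (integrable_const 1) fun w => hl1 _ _ _
      _ = 1 := by simp
  have hRanti : ∀ ⦃lam lam' : ℝ⦄, 0 ≤ lam → lam ≤ lam' → R lam' ≤ R lam := by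
    intro lam lam' h0 hle
    rw [hR, hR]
    exact integral_mono (hlint lam') (hlint lam) fun w => hlossmono _ _ h0 hle
  have hRhatanti : ∀ (ω : Ω) ⦃lam lam' : ℝ⦄, 0 ≤ lam → lam ≤ lam' →
      Rhat ω lam' ≤ Rhat ω lam := by
    intro ω lam lam' h0 hle
    rw [hRhat, hRhat]
    gcongr with i hi
    exact hlossmono _ _ h0 hle
  -- the key Hoeffding estimate at a fixed level `lam` with `R lam > α`
  have key : ∀ lam : ℝ, α < R lam → P {ω | Rhat ω lam ≤ α} ≤ ENNReal.ofReal δ := by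
    intro lam hαR
    set b : ℝ := Real.sqrt (Real.log (1/δ) / (2*n)) with hbdef
    have hXmeas : ∀ i, Measurable fun ω => loss lam (W i ω).1 (W i ω).2 :=
      fun i => (hlm lam).comp (hWmeas i)
    have hXindep : iIndepFun
        (fun i ω => loss lam (W i ω).1 (W i ω).2) P :=
      hWindep.comp (fun _ w => loss lam w.1 w.2) (fun _ => hlm lam)
    have hXmean : ∀ i, ∫ ω, loss lam (W i ω).1 (W i ω).2 ∂P = R lam := by
      intro i
      rw [hR, ← hWlaw i, integral_map (hWmeas i).aemeasurable (hlm lam).aestronglyMeasurable]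
    have hmain := chernoff_bound P n hn (fun i ω => loss lam (W i ω).1 (W i ω).2)
      hXmeas hXindep (fun i ω => hl0 _ _ _) (fun i ω => hl1 _ _ _)
      (R lam) (hR0 lam) (hR1 lam) hXmean α δ b hδ.1 hδ.2 hbdef hαR
    refine le_trans (measure_mono ?_) hmain
    intro ω hω
    simp only [Set.mem_setOf_eq] at hω ⊢
    rw [hRhat] at hω
    simp only [Finset.sum_apply]
    have h1 : (∑ i, loss lam (W i ω).1 (W i ω).2) / n ≤ α - b := by linarith
    have h2 := (div_le_iff₀ hn').1 h1
    linarith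
  -- the supremum level
  set Sstar : Set ℝ := {lam | 0 ≤ lam ∧ R lam > α} with hSstardef
  set lamstar : ℝ := sSup Sstar with hlamstardef
  have hstar0 : 0 < lamstar := by
    obtain ⟨a, ha0, haR⟩ := hRne
    have hale : a ≤ lamstar := le_csSup hRbdd ⟨ha0, haR⟩
    by_contra hcon
    push_neg at hcon
    have ha0' : a = 0 := le_antisymm (hale.trans hcon) ha0
    have hls : lamstar = 0 := le_antisymm hcon (by rw [← ha0']; exact hale)
    have hbad : R lamstar > α := by rw [hls, ← ha0']; exact haR
    exact absurd hRstar (not_le.2 hbad)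
  -- the approximating sequence
  set lamk : ℕ → ℝ := fun k => max 0 (lamstar - 1/(k+1)) with hlamkdef
  have hlamk0 : ∀ k, 0 ≤ lamk k := fun k => le_max_left _ _
  have hlamklt : ∀ k, lamk k < lamstar := by
    intro k
    apply max_lt hstar0
    have hpos : (0:ℝ) < 1/((k:ℝ)+1) := by positivity
    linarith
  have hlamkmono : Monotone lamk := by
    intro k k' hkk
    have hcast : ((k:ℝ)+1) ≤ (k':ℝ)+1 := by exact_mod_cast Nat.succ_le_succ hkk
    have h1 : (1:ℝ)/((k':ℝ)+1) ≤ 1/((k:ℝ)+1) :=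
      one_div_le_one_div_of_le (by positivity) hcast
    exact max_le_max le_rfl (by linarith)
  have hRk : ∀ k, α < R (lamk k) := by
    intro k
    obtain ⟨a, ha, hka⟩ := exists_lt_of_lt_csSup hRne (hlamklt k)
    exact lt_of_lt_of_le ha.2 (hRanti (hlamk0 k) hka.le)
  set A : ℕ → Set Ω := fun k => {ω | Rhat ω (lamk k) ≤ α} with hAdef
  have hAmono : Monotone A := by
    intro k k' hkk ω hω
    exact le_trans (hRhatanti ω (hlamk0 k) (hlamkmono hkk)) hω
  -- inclusion of the failure event
  have hincl : {ω | R (lamHat ω) ≤ α}ᶜ ⊆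
      {ω | ¬ ({lam | 0 ≤ lam ∧ ∀ lam' ≥ lam, Rhat ω lam' ≤ α}).Nonempty} ∪ ⋃ k, A k := by
    intro ω hω
    by_cases hSne : ({lam | 0 ≤ lam ∧ ∀ lam' ≥ lam, Rhat ω lam' ≤ α}).Nonempty
    · right
      have hωR : α < R (lamHat ω) := not_le.1 hω
      have hlh0 : 0 ≤ lamHat ω := by
        rw [hlamHat]; exact le_csInf hSne fun x hx => hx.1
      have hmem : lamHat ω ∈ Sstar := ⟨hlh0, hωR⟩
      have hle : lamHat ω ≤ lamstar := le_csSup hRbdd hmem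
      have hlt : lamHat ω < lamstar := by
        rcases lt_or_eq_of_le hle with h | h
        · exact h
        · exact absurd hRstar (by rw [← h]; exact not_le.2 hωR)
      obtain ⟨k, hk⟩ := exists_nat_gt (1/(lamstar - lamHat ω))
      have hgap : (0:ℝ) < lamstar - lamHat ω := by linarith
      have hk1 : (1:ℝ)/((k:ℝ)+1) < lamstar - lamHat ω := by
        rw [div_lt_iff₀ (by positivity)]
        nlinarith [(div_lt_iff₀ hgap).1 hk]
      have hlamHatlt : lamHat ω < lamk k := by
        have h3 : lamHat ω < lamstar - 1/((k:ℝ)+1) := by linarith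
        exact h3.trans_le (le_max_right _ _)
      rw [hlamHat] at hlamHatlt
      obtain ⟨lam, hlamS, hlamlt⟩ := exists_lt_of_csInf_lt hSne hlamHatlt
      exact Set.mem_iUnion.2 ⟨k, hlamS.2 (lamk k) hlamlt.le⟩
    · left; exact hSne
  have hNnull :
      P {ω | ¬ ({lam | 0 ≤ lam ∧ ∀ lam' ≥ lam, Rhat ω lam' ≤ α}).Nonempty} = 0 :=
    ae_iff.1 hne
  have hUnion : P (⋃ k, A k) ≤ ENNReal.ofReal δ := by
    rw [hAmono.directed_le.measure_iUnion]
    exact iSup_le fun k => key (lamk k) (hRk k)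
  have hcompl : P {ω | R (lamHat ω) ≤ α}ᶜ ≤ ENNReal.ofReal δ := by
    calc P {ω | R (lamHat ω) ≤ α}ᶜ
        ≤ P ({ω | ¬ ({lam | 0 ≤ lam ∧ ∀ lam' ≥ lam, Rhat ω lam' ≤ α}).Nonempty} ∪ ⋃ k, A k) :=
          measure_mono hincl
      _ ≤ P {ω | ¬ ({lam | 0 ≤ lam ∧ ∀ lam' ≥ lam, Rhat ω lam' ≤ α}).Nonempty} +
            P (⋃ k, A k) := measure_union_le _ _
      _ ≤ 0 + ENNReal.ofReal δ := add_le_add hNnull.le hUnion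
      _ = ENNReal.ofReal δ := zero_add _
  have h1 : (1:ENNReal) ≤ P {ω | R (lamHat ω) ≤ α} + ENNReal.ofReal δ := by
    calc (1:ENNReal) = P Set.univ := measure_univ.symm
      _ = P ({ω | R (lamHat ω) ≤ α} ∪ {ω | R (lamHat ω) ≤ α}ᶜ) := by
          rw [Set.union_compl_self]
      _ ≤ P {ω | R (lamHat ω) ≤ α} + P {ω | R (lamHat ω) ≤ α}ᶜ := measure_union_le _ _
      _ ≤ _ := add_le_add_right hcompl _
  exact tsub_le_iff_right.2 h1
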